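/- Let p ∈ (0,1] and suppose (g,d) is a solution of the system g'(t) = 2p·g(t)(1-g(t))^2/(1-2t+g(t)+2d(t)), d'(t) = 2(1-p)g(t)(1-g(t)) + g(t)^2 on (1/2,∞) with initial values g(1/2)=a ∈ [0,1), d(1/2)=b ≥ 0. Define r(t) = (t + ε - g(t) - d(t))/(1 - g(t)) for ε ≥ 0 (the case ε = b + a²/2 relevant) and δ = (ε - b - a²/2)/(1-a)². Then the function h(t) = r(t) - (t+δ)(1-g(t)) satisfies h(1/2)=0 and h'(t) = -h(t)·g'(t)/(1-g(t)), hence h ≡ 0; i.e. (t+ε-g(t)-d(t))/(1-g(t)) = (t+δ)(1-g(t)) for all t ≥ 1/2. -/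

import Mathlib

open Real Set

/-- Let `p ∈ (0,1]`, `ε ≥ 0`, and `(g,d)` a solution of the system
`g' = 2p g(1-g)²/(1-2(t+ε)+g+2d)`, `d' = 2(1-p)g(1-g)+g²` on `(1/2,∞)` starting from
`(a,b) ∈ [0,1)×[0,∞)`.  With `δ = (ε-b-a²/2)/(1-a)²`, the function
`h(t) = (t+ε-g(t)-d(t))/(1-g(t)) - (t+δ)(1-g(t))` satisfies `h(1/2)=0` and
`h' = -h·g'/(1-g)`, hence `h ≡ 0`: for all `t ≥ 1/2`,
`(t+ε-g(t)-d(t))/(1-g(t)) = (t+δ)(1-g(t))`. -/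
theorem ratio_identity (p ε a b : ℝ) (hp : p ∈ Set.Ioc (0:ℝ) 1) (hε : 0 ≤ ε)
    (ha : a ∈ Set.Ico (0:ℝ) 1) (hb : 0 ≤ b)
    (δ : ℝ) (hδ : δ = (ε - b - a ^ 2 / 2) / (1 - a) ^ 2)
    (g d : ℝ → ℝ)
    (hgmono : StrictMonoOn g (Set.Ici (1/2 : ℝ)))
    (hdmono : StrictMonoOn d (Set.Ici (1/2 : ℝ)))
    (hgmem : ∀ t ∈ Set.Ici (1/2 : ℝ), g t ∈ Set.Ico a 1)
    (hdmem : ∀ t ∈ Set.Ici (1/2 : ℝ), d t ∈ Set.Ici b)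
    (hgc : ContinuousOn g (Set.Ici (1/2 : ℝ)))
    (hdc : ContinuousOn d (Set.Ici (1/2 : ℝ)))
    (hg0 : g (1/2) = a) (hd0 : d (1/2) = b)
    (hpos : ∀ t > (1/2 : ℝ), 0 < 1 - 2 * (t + ε) + g t + 2 * d t)
    (hgode : ∀ t > (1/2 : ℝ),
      HasDerivAt g (2 * p * g t * (1 - g t) ^ 2 / (1 - 2 * (t + ε) + g t + 2 * d t)) t)
    (hdode : ∀ t > (1/2 : ℝ),
      HasDerivAt d (2 * (1 - p) * g t * (1 - g t) + g t ^ 2) t) :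
    ((1/2 : ℝ) + ε - g (1/2) - d (1/2)) / (1 - g (1/2)) - ((1/2 : ℝ) + δ) * (1 - g (1/2)) = 0 ∧
    (∀ t > (1/2 : ℝ),
      HasDerivAt (fun s => (s + ε - g s - d s) / (1 - g s) - (s + δ) * (1 - g s))
        (-((t + ε - g t - d t) / (1 - g t) - (t + δ) * (1 - g t)) *
            (2 * p * g t * (1 - g t) ^ 2 / (1 - 2 * (t + ε) + g t + 2 * d t)) / (1 - g t)) t) ∧
    ∀ t ∈ Set.Ici (1/2 : ℝ),
      (t + ε - g t - d t) / (1 - g t) = (t + δ) * (1 - g t) := by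
  obtain ⟨hp0, hp1⟩ := hp
  obtain ⟨ha0, ha1⟩ := ha
  have hDpos : ∀ t ∈ Set.Ici (1/2 : ℝ), 0 < 1 - g t := fun t ht => by
    have := (hgmem t ht).2; linarith
  have hDne : ∀ t ∈ Set.Ici (1/2 : ℝ), (1 : ℝ) - g t ≠ 0 := fun t ht => (hDpos t ht).ne'
  have ha1' : (1:ℝ) - a ≠ 0 := by linarith
  have part1 : ((1/2 : ℝ) + ε - g (1/2) - d (1/2)) / (1 - g (1/2))
      - ((1/2 : ℝ) + δ) * (1 - g (1/2)) = 0 := by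
    rw [hg0, hd0, hδ]
    field_simp
    ring
  have part2 : ∀ t > (1/2 : ℝ),
      HasDerivAt (fun s => (s + ε - g s - d s) / (1 - g s) - (s + δ) * (1 - g s))
        (-((t + ε - g t - d t) / (1 - g t) - (t + δ) * (1 - g t)) *
            (2 * p * g t * (1 - g t) ^ 2 / (1 - 2 * (t + ε) + g t + 2 * d t)) / (1 - g t)) t := by
    intro t ht
    have ht' : t ∈ Set.Ici (1/2:ℝ) := le_of_lt ht
    have hQ := hpos t ht
    have hQne : (1 - 2 * (t + ε) + g t + 2 * d t) ≠ 0 := hQ.ne'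
    have hDne' := hDne t ht'
    have hg' := hgode t ht
    have hd' := hdode t ht
    have hnum : HasDerivAt (fun s => s + ε - g s - d s)
        (1 - 2 * p * g t * (1 - g t) ^ 2 / (1 - 2 * (t + ε) + g t + 2 * d t)
          - (2 * (1 - p) * g t * (1 - g t) + g t ^ 2)) t :=
      (((hasDerivAt_id t).add_const ε).sub hg').sub hd'
    have hden : HasDerivAt (fun s => 1 - g s)
        (-(2 * p * g t * (1 - g t) ^ 2 / (1 - 2 * (t + ε) + g t + 2 * d t))) t :=
      hg'.const_sub 1
    have hmul : HasDerivAt (fun s => (s + δ) * (1 - g s))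
        (1 * (1 - g t) + (t + δ) *
          (-(2 * p * g t * (1 - g t) ^ 2 / (1 - 2 * (t + ε) + g t + 2 * d t)))) t :=
      ((hasDerivAt_id t).add_const δ).mul hden
    have hdiv := hnum.div hden hDne'
    have := hdiv.sub hmul
    refine this.congr_deriv ?_
    field_simp
    ring
  refine ⟨part1, part2, ?_⟩
  set φ : ℝ → ℝ := fun s =>
    ((s + ε - g s - d s) / (1 - g s) - (s + δ) * (1 - g s)) / (1 - g s) with hφdef
  have hφderiv : ∀ t > (1/2 : ℝ), HasDerivAt φ 0 t := by
    intro t ht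
    have ht' : t ∈ Set.Ici (1/2:ℝ) := le_of_lt ht
    have hQ := hpos t ht
    have hQne : (1 - 2 * (t + ε) + g t + 2 * d t) ≠ 0 := hQ.ne'
    have hDne' := hDne t ht'
    have hden : HasDerivAt (fun s => 1 - g s)
        (-(2 * p * g t * (1 - g t) ^ 2 / (1 - 2 * (t + ε) + g t + 2 * d t))) t :=
      (hgode t ht).const_sub 1
    have := (part2 t ht).div hden hDne'
    refine this.congr_deriv ?_
    field_simp
    ring
  have hφcont : ContinuousOn φ (Set.Ici (1/2 : ℝ)) := by
    have hg1 : ContinuousOn (fun s => 1 - g s) (Set.Ici (1/2 : ℝ)) :=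
      continuousOn_const.sub hgc
    exact ((((continuousOn_id.add continuousOn_const).sub hgc).sub hdc).div hg1 hDne
      |>.sub ((continuousOn_id.add continuousOn_const).mul hg1)).div hg1 hDne
  have hφ0 : φ (1/2) = 0 := by
    simp only [hφdef]
    rw [part1, zero_div]
  have hφzero : ∀ t ∈ Set.Ici (1/2 : ℝ), φ t = 0 := by
    intro t ht
    rcases eq_or_lt_of_le (show (1/2:ℝ) ≤ t from ht) with rfl | htlt
    · exact hφ0
    · have key : ∀ s ∈ Set.Ioc (1/2:ℝ) t, φ t = φ s := by
        intro s hs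
        have hsub : Set.Icc s t ⊆ Set.Ici (1/2 : ℝ) :=
          fun x hx => le_trans (le_of_lt hs.1) hx.1
        have := constant_of_has_deriv_right_zero (f := φ) (a := s) (b := t)
          (hφcont.mono hsub)
          (fun x hx => (hφderiv x (lt_of_lt_of_le hs.1 hx.1)).hasDerivWithinAt)
        exact this t ⟨hs.2, le_refl t⟩
      have h1 : Filter.Tendsto φ (nhdsWithin (1/2) (Set.Ioi (1/2:ℝ))) (nhds (φ (1/2))) :=
        (hφcont (1/2) Set.self_mem_Ici).mono_left (nhdsWithin_mono _ Set.Ioi_subset_Ici_self)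
      have h2 : Filter.Tendsto φ (nhdsWithin (1/2) (Set.Ioi (1/2:ℝ))) (nhds (φ t)) := by
        apply Filter.Tendsto.congr' _ tendsto_const_nhds
        filter_upwards [Ioc_mem_nhdsGT htlt] with s hs using key s hs
      have := tendsto_nhds_unique h1 h2
      rw [← this, hφ0]
  intro t ht
  have := hφzero t ht
  simp only [hφdef] at this
  rcases div_eq_zero_iff.mp this with h | h
  · linarith [sub_eq_zero.mp h]
  · exact absurd h (hDne t ht)
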